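/- Let R^f be a scoring mediator where f: ℝ → ℝ₊ is non-decreasing and continuous with f(1) > 2f(0). Then R^f is not u^{Ex}-learnable: there exists an authors game with mediator R^f and exposure-targeted utility containing an improvement cycle (hence lacking the finite improvement property). -/

import Mathlib

open Finset

noncomputable section

/-- Highest quality of a document on topic `k` under profile `a`:
`B_k(a) = max_j Q_{j,k} · 1[a_j = k]` (with value `0` when the max is over an empty set). -/
def hiQ {n m : ℕ} (Q : Fin n → Fin m → ℝ) (k : Fin m) (a : Fin n → Fin m) : ℝ :=
  Finset.univ.fold max 0 (fun j => if a j = k then Q j k else 0)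

/-- Number of authors writing on topic `k` with the highest quality `B_k(a)`. -/
def numTop {n m : ℕ} (Q : Fin n → Fin m → ℝ) (k : Fin m) (a : Fin n → Fin m) : ℕ :=
  (Finset.univ.filter (fun j => a j = k ∧ Q j k = hiQ Q k a)).card

/-- The PRP mediator: first-rank probability of author `j` on topic `k` under profile `a`. -/
def prp {n m : ℕ} (Q : Fin n → Fin m → ℝ) (k : Fin m) (a : Fin n → Fin m) (j : Fin n) : ℝ :=
  if a j = k ∧ Q j k = hiQ Q k a then 1 / (numTop Q k a : ℝ) else 0

/-- Exposure-targeted utility under the PRP mediator. -/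
def uEx {n m : ℕ} (D : Fin m → ℝ) (Q : Fin n → Fin m → ℝ) (a : Fin n → Fin m) (j : Fin n) : ℝ :=
  D (a j) * prp Q (a j) a j

/-- Action-targeted utility under the PRP mediator. -/
def uAc {n m : ℕ} (D : Fin m → ℝ) (Q : Fin n → Fin m → ℝ) (a : Fin n → Fin m) (j : Fin n) : ℝ :=
  D (a j) * prp Q (a j) a j * Q j (a j)

/-- `b` is obtained from `a` by a unilateral deviation of author `p` strictly
increasing her utility (an improvement step). -/
def ImpStep {n m : ℕ} (u : (Fin n → Fin m) → Fin n → ℝ)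
    (a b : Fin n → Fin m) (p : Fin n) : Prop :=
  (∀ i, i ≠ p → b i = a i) ∧ b p ≠ a p ∧ u a p < u b p

/-- `γ` is an improvement path: each consecutive pair of profiles is an improvement step. -/
def IsImpPath {n m l : ℕ} (u : (Fin n → Fin m) → Fin n → ℝ)
    (γ : Fin (l + 1) → Fin n → Fin m) : Prop :=
  ∀ r : Fin l, ∃ p, ImpStep u (γ r.castSucc) (γ r.succ) p

/-- `W_k(γ)`: the minimum of `H_k` over all profiles in the finite path `γ`. -/
def minTop {n m l : ℕ} (Q : Fin n → Fin m → ℝ) (k : Fin m)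
    (γ : Fin (l + 1) → Fin n → Fin m) : ℕ :=
  Finset.univ.inf' Finset.univ_nonempty (fun r => numTop Q k (γ r))

/-- `S_k(γ)`: the maximum of `B_k` over all profiles in the finite path `γ`. -/
def maxQ {n m l : ℕ} (Q : Fin n → Fin m → ℝ) (k : Fin m)
    (γ : Fin (l + 1) → Fin n → Fin m) : ℝ :=
  Finset.univ.sup' Finset.univ_nonempty (fun r => hiQ Q k (γ r))

/-- A scoring mediator with scoring function `f`: author `j` writing on topic `k`
gets first-rank probability `f(Q_{j,k}) / Σ_{i : a_i = k} f(Q_{i,k})`. -/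
def scoreMed {n m : ℕ} (f : ℝ → ℝ) (Q : Fin n → Fin m → ℝ) (k : Fin m)
    (a : Fin n → Fin m) (j : Fin n) : ℝ :=
  if a j = k then
    f (Q j k) / (∑ i ∈ Finset.univ.filter (fun i => a i = k), f (Q i k))
  else 0

/-- Exposure-targeted utility under the scoring mediator `R^f`. -/
def uExScore {n m : ℕ} (f : ℝ → ℝ) (D : Fin m → ℝ) (Q : Fin n → Fin m → ℝ)
    (a : Fin n → Fin m) (j : Fin n) : ℝ :=
  D (a j) * scoreMed f Q (a j) a j

/-- Action-targeted utility under the scoring mediator `R^f`. -/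
def uAcScore {n m : ℕ} (f : ℝ → ℝ) (D : Fin m → ℝ) (Q : Fin n → Fin m → ℝ)
    (a : Fin n → Fin m) (j : Fin n) : ℝ :=
  D (a j) * scoreMed f Q (a j) a j * Q j (a j)


/-! ### Auxiliary construction for `stmt15` -/

/-- The topic distribution used in the improvement-cycle witness. -/
def cycD : Fin 3 → ℝ := ![100/225, 62/225, 63/225]

/-- The quality matrix used in the improvement-cycle witness. -/
def cycQ (x₁ x₂ x₃ : ℝ) : Fin 4 → Fin 3 → ℝ :=
  ![![x₃,1,1], ![x₂,1,1], ![x₁,1,1], ![1,1,x₁]]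

/-- The cyclic improvement path. -/
def cycG : Fin 7 → Fin 4 → Fin 3 :=
  ![![0,0,0,1], ![0,0,0,2], ![2,0,0,2], ![2,1,0,2], ![2,1,0,1], ![0,1,0,1], ![0,0,0,1]]

lemma utilEval (f : ℝ → ℝ) (D : Fin 3 → ℝ) (Q : Fin 4 → Fin 3 → ℝ) (a : Fin 4 → Fin 3) (j : Fin 4) :
    uExScore f D Q a j = D (a j) * (f (Q j (a j)) /
      ((if a 0 = a j then f (Q 0 (a j)) else 0) + ((if a 1 = a j then f (Q 1 (a j)) else 0) +
       ((if a 2 = a j then f (Q 2 (a j)) else 0) + (if a 3 = a j then f (Q 3 (a j)) else 0))))) := by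
  simp [uExScore, scoreMed, Finset.sum_filter, Fin.sum_univ_four, add_assoc]

section Steps
variable (f : ℝ → ℝ) (x₁ x₂ x₃ : ℝ)

lemma step1 (hF : 0 < f 1) (h1 : f x₁ = 1/2 * f 1) (h2 : f x₂ = 4/5 * f 1) (h3 : f x₃ = 9/10 * f 1) :
    ImpStep (uExScore f cycD (cycQ x₁ x₂ x₃)) ![0,0,0,1] ![0,0,0,2] 3 := by
  refine ⟨by decide, by decide, ?_⟩
  rw [utilEval, utilEval]
  simp only [cycD, cycQ, Matrix.cons_val]
  norm_num [cycD, cycQ, Fin.ext_iff, Matrix.vecHead, Matrix.vecTail]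
  rw [h1, div_self hF.ne', div_self (by linarith : (1:ℝ)/2 * f 1 ≠ 0)]
  norm_num

lemma step2 (hF : 0 < f 1) (h1 : f x₁ = 1/2 * f 1) (h2 : f x₂ = 4/5 * f 1) (h3 : f x₃ = 9/10 * f 1) :
    ImpStep (uExScore f cycD (cycQ x₁ x₂ x₃)) ![0,0,0,2] ![2,0,0,2] 0 := by
  refine ⟨by decide, by decide, ?_⟩
  rw [utilEval, utilEval]
  simp only [cycD, cycQ, Matrix.cons_val]
  norm_num [cycD, cycQ, Fin.ext_iff, Matrix.vecHead, Matrix.vecTail]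
  rw [h1, h2, h3]
  rw [← mul_div_assoc, ← mul_div_assoc, div_lt_div_iff₀ (by linarith) (by linarith)]
  nlinarith [mul_pos hF hF]

lemma step3 (hF : 0 < f 1) (h1 : f x₁ = 1/2 * f 1) (h2 : f x₂ = 4/5 * f 1) (h3 : f x₃ = 9/10 * f 1) :
    ImpStep (uExScore f cycD (cycQ x₁ x₂ x₃)) ![2,0,0,2] ![2,1,0,2] 1 := by
  refine ⟨by decide, by decide, ?_⟩
  rw [utilEval, utilEval]
  simp only [cycD, cycQ, Matrix.cons_val]
  norm_num [cycD, cycQ, Fin.ext_iff, Matrix.vecHead, Matrix.vecTail]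
  rw [h1, h2]
  rw [← mul_div_assoc, ← mul_div_assoc, div_lt_div_iff₀ (by linarith) (by linarith)]
  nlinarith [mul_pos hF hF]

lemma step4 (hF : 0 < f 1) (h1 : f x₁ = 1/2 * f 1) (h2 : f x₂ = 4/5 * f 1) (h3 : f x₃ = 9/10 * f 1) :
    ImpStep (uExScore f cycD (cycQ x₁ x₂ x₃)) ![2,1,0,2] ![2,1,0,1] 3 := by
  refine ⟨by decide, by decide, ?_⟩
  rw [utilEval, utilEval]
  simp only [cycD, cycQ, Matrix.cons_val]
  norm_num [cycD, cycQ, Fin.ext_iff, Matrix.vecHead, Matrix.vecTail]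
  rw [h1]
  rw [← mul_div_assoc, ← mul_div_assoc, div_lt_div_iff₀ (by linarith) (by linarith)]
  nlinarith [mul_pos hF hF]

lemma step5 (hF : 0 < f 1) (h1 : f x₁ = 1/2 * f 1) (h2 : f x₂ = 4/5 * f 1) (h3 : f x₃ = 9/10 * f 1) :
    ImpStep (uExScore f cycD (cycQ x₁ x₂ x₃)) ![2,1,0,1] ![0,1,0,1] 0 := by
  refine ⟨by decide, by decide, ?_⟩
  rw [utilEval, utilEval]
  simp only [cycD, cycQ, Matrix.cons_val]
  norm_num [cycD, cycQ, Fin.ext_iff, Matrix.vecHead, Matrix.vecTail]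
  rw [h1, h3]
  rw [← mul_div_assoc, ← mul_div_assoc, div_lt_div_iff₀ (by linarith) (by linarith)]
  nlinarith [mul_pos hF hF]

lemma step6 (hF : 0 < f 1) (h1 : f x₁ = 1/2 * f 1) (h2 : f x₂ = 4/5 * f 1) (h3 : f x₃ = 9/10 * f 1) :
    ImpStep (uExScore f cycD (cycQ x₁ x₂ x₃)) ![0,1,0,1] ![0,0,0,1] 1 := by
  refine ⟨by decide, by decide, ?_⟩
  rw [utilEval, utilEval]
  simp only [cycD, cycQ, Matrix.cons_val]
  norm_num [cycD, cycQ, Fin.ext_iff, Matrix.vecHead, Matrix.vecTail]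
  rw [h1, h2, h3]
  rw [← mul_div_assoc, ← mul_div_assoc, div_lt_div_iff₀ (by linarith) (by linarith)]
  nlinarith [mul_pos hF hF]

end Steps

/-- A scoring mediator `R^f` with `f` non-decreasing, continuous, nonnegative and
`f(1) > 2f(0)` is not `u^{Ex}`-learnable: some authors game with mediator `R^f` and
exposure-targeted utility contains an improvement cycle. -/
theorem stmt15 (f : ℝ → ℝ) (hf0 : ∀ x, 0 ≤ f x) (hmono : Monotone f)
    (hcont : Continuous f) (hgap : 2 * f 0 < f 1) :
    ∃ (n m l : ℕ) (D : Fin m → ℝ) (Q : Fin n → Fin m → ℝ)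
      (γ : Fin (l + 1) → Fin n → Fin m),
      0 < l ∧ (∀ k, 0 ≤ D k) ∧ (∑ k, D k = 1) ∧
      (∀ j k, Q j k ∈ Set.Icc (0:ℝ) 1) ∧
      IsImpPath (uExScore f D Q) γ ∧ γ (Fin.last l) = γ 0 := by
  have hf00 := hf0 0
  have hF : 0 < f 1 := by linarith
  have ivt : ∀ y : ℝ, f 0 ≤ y → y ≤ f 1 → ∃ x, x ∈ Set.Icc (0:ℝ) 1 ∧ f x = y := by
    intro y hy1 hy2
    have h := intermediate_value_Icc (by norm_num : (0:ℝ) ≤ 1) hcont.continuousOn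
    obtain ⟨x, hx, hfx⟩ := h ⟨hy1, hy2⟩
    exact ⟨x, hx, hfx⟩
  obtain ⟨x₁, hx₁I, h1⟩ := ivt (1/2 * f 1) (by linarith) (by linarith)
  obtain ⟨x₂, hx₂I, h2⟩ := ivt (4/5 * f 1) (by linarith) (by linarith)
  obtain ⟨x₃, hx₃I, h3⟩ := ivt (9/10 * f 1) (by linarith) (by linarith)
  obtain ⟨a1, b1⟩ := hx₁I
  obtain ⟨a2, b2⟩ := hx₂I
  obtain ⟨a3, b3⟩ := hx₃I
  refine ⟨4, 3, 6, cycD, cycQ x₁ x₂ x₃, cycG, by norm_num, ?_, ?_, ?_, ?_, by decide⟩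
  · intro k; fin_cases k <;> norm_num [cycD]
  · simp only [cycD, Fin.sum_univ_three, Matrix.cons_val]
    norm_num
  · intro j k
    fin_cases j <;> fin_cases k <;>
      norm_num [cycQ, Matrix.vecHead, Matrix.vecTail, Set.mem_Icc] <;>
      first
        | exact ⟨a1, b1⟩
        | exact ⟨a2, b2⟩
        | exact ⟨a3, b3⟩
  · intro r
    fin_cases r
    · exact ⟨3, step1 f x₁ x₂ x₃ hF h1 h2 h3⟩
    · exact ⟨0, step2 f x₁ x₂ x₃ hF h1 h2 h3⟩
    · exact ⟨1, step3 f x₁ x₂ x₃ hF h1 h2 h3⟩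
    · exact ⟨3, step4 f x₁ x₂ x₃ hF h1 h2 h3⟩
    · exact ⟨0, step5 f x₁ x₂ x₃ hF h1 h2 h3⟩
    · exact ⟨1, step6 f x₁ x₂ x₃ hF h1 h2 h3⟩
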